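/- Let C ⊆ F_2^n be a linear code, W(k) ⊆ [n]^k a (1−2ζ, η)-parity sampler for some ζ < 1/2 and η < 1/4, ỹ ∈ F_2^{W(k)}, and L the set of codewords z ∈ C with Δ(dsum_W(z), ỹ) ≤ 1/2 − √η. Suppose L' is a finite set of words in F_2^n such that (a) every z ∈ L has some z' ∈ L' with bias(z − z') > 1 − 2ζ, and (b) Δ(dsum_W(z'), ỹ) ≤ 1/2 − √η for all z' ∈ L'. Then there exists L'' ⊆ L' with |L''| ≤ 1/η such that every z ∈ L has some z'' ∈ L'' with Δ(z, z'') < 2ζ or Δ(z, z'') > 1 − 2ζ. -/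

import Mathlib

lemma term_eq (p q : ZMod 2) :
    (-1:ℝ)^(p-q).val = 1 - 2 * (if p ≠ q then 1 else 0) := by
  have h1 : ∀ r : ZMod 2, ((-1:ℝ))^r.val = if r = 0 then 1 else -1 := by
    intro r; fin_cases r <;> simp [ZMod.val] <;> intro h
    · exact absurd rfl h
    · exact absurd (congrArg (ZMod.val (n := 2)) h) (by decide)
  rw [h1]
  have h2 : p - q = 0 ↔ p = q := sub_eq_zero
  by_cases h : p = q <;> simp [h, h2] <;> norm_num

lemma mul_term_eq (p q : ZMod 2) :
    (-1:ℝ)^p.val * (-1:ℝ)^q.val = (-1:ℝ)^(p-q).val := by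
  have h1 : ∀ r : ZMod 2, ((-1:ℝ))^r.val = if r = 0 then 1 else -1 := by
    intro r; fin_cases r <;> simp [ZMod.val] <;> intro h
    · exact absurd rfl h
    · exact absurd (congrArg (ZMod.val (n := 2)) h) (by decide)
  rw [h1, h1, h1]
  have h3 : ∀ r : ZMod 2, r = 0 ∨ r = 1 := by decide
  rcases h3 p with rfl|rfl <;> rcases h3 q with rfl|rfl <;>
    simp [show ((0:ZMod 2) - 1) ≠ 0 by decide, show ((1:ZMod 2) - 0) ≠ 0 by decide,
      show ((1:ZMod 2) - 1) = 0 by decide]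

lemma sum_sign_eq {ι : Type*} [Fintype ι] (x y : ι → ZMod 2) :
    ∑ i, (-1:ℝ)^((x i) - (y i)).val
      = (Fintype.card ι : ℝ) - 2 * ((Finset.univ.filter fun i => x i ≠ y i).card) := by
  classical
  simp only [term_eq]
  rw [Finset.sum_sub_distrib, ← Finset.mul_sum, Finset.sum_boole]
  simp [Finset.card_univ]

/-- The bias of a word `z ∈ F_2^n`. -/
noncomputable def bias (n : ℕ) (z : Fin n → ZMod 2) : ℝ :=
  |(∑ i, (-1 : ℝ) ^ (z i).val) / n|

/-- The direct sum lifting. -/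
def dsum {n k : ℕ} (W : Finset (Fin k → Fin n)) (z : Fin n → ZMod 2) :
    {w // w ∈ W} → ZMod 2 :=
  fun w => ∑ i, z (w.1 i)

/-- Bias of a lifted word. -/
noncomputable def biasW {n k : ℕ} (W : Finset (Fin k → Fin n))
    (y : {w // w ∈ W} → ZMod 2) : ℝ :=
  |(∑ w : {w // w ∈ W}, (-1 : ℝ) ^ (y w).val) / W.card|

/-- Normalized Hamming distance on `F_2^n`. -/
noncomputable def hdist {n : ℕ} (x y : Fin n → ZMod 2) : ℝ :=
  ((Finset.univ.filter fun i => x i ≠ y i).card : ℝ) / n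

/-- Normalized Hamming distance on `F_2^{W(k)}`. -/
noncomputable def hdistW {n k : ℕ} (W : Finset (Fin k → Fin n))
    (x y : {w // w ∈ W} → ZMod 2) : ℝ :=
  ((Finset.univ.filter fun w => x w ≠ y w).card : ℝ) / W.card

lemma bias_sub_eq {n : ℕ} (hn : 0 < n) (x y : Fin n → ZMod 2) :
    bias n (x - y) = |1 - 2 * hdist x y| := by
  have hnR : (0:ℝ) < n := by exact_mod_cast hn
  unfold bias hdist
  simp only [Pi.sub_apply]
  rw [sum_sign_eq]
  have : ((Fintype.card (Fin n) : ℝ) - 2 * ((Finset.univ.filter fun i => x i ≠ y i).card)) / n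
      = 1 - 2 * (((Finset.univ.filter fun i => x i ≠ y i).card : ℝ) / n) := by
    simp only [Fintype.card_fin]
    field_simp
  rw [this]

lemma biasW_sub_eq {n k : ℕ} (W : Finset (Fin k → Fin n)) (hW : W.Nonempty)
    (x y : {w // w ∈ W} → ZMod 2) :
    biasW W (x - y) = |1 - 2 * hdistW W x y| := by
  have hNR : (0:ℝ) < W.card := by exact_mod_cast hW.card_pos
  unfold biasW hdistW
  simp only [Pi.sub_apply]
  rw [sum_sign_eq]
  have : ((Fintype.card {w // w ∈ W} : ℝ) - 2 * ((Finset.univ.filter fun w => x w ≠ y w).card)) / W.card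
      = 1 - 2 * (((Finset.univ.filter fun w => x w ≠ y w).card : ℝ) / W.card) := by
    simp only [Fintype.card_coe]
    field_simp
  rw [this]

lemma hdist_comm {n : ℕ} (x y : Fin n → ZMod 2) : hdist x y = hdist y x := by
  unfold hdist
  have h : (Finset.univ.filter fun i => x i ≠ y i)
      = Finset.univ.filter fun i => y i ≠ x i :=
    Finset.filter_congr fun i _ => ne_comm
  rw [h]

lemma hdist_self {n : ℕ} (x : Fin n → ZMod 2) : hdist x x = 0 := by
  unfold hdist; simp

lemma hdist_triangle {n : ℕ} (x y z : Fin n → ZMod 2) :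
    hdist x z ≤ hdist x y + hdist y z := by
  classical
  unfold hdist
  rw [← add_div]
  rcases Nat.eq_zero_or_pos n with h0 | hn
  · subst h0; simp
  have hnR : (0:ℝ) < n := by exact_mod_cast hn
  have hsub : (Finset.univ.filter fun i => x i ≠ z i)
      ⊆ (Finset.univ.filter fun i => x i ≠ y i) ∪ (Finset.univ.filter fun i => y i ≠ z i) := by
    intro i hi
    simp only [Finset.mem_filter, Finset.mem_union, Finset.mem_univ, true_and] at hi ⊢
    by_contra hc
    push_neg at hc
    exact hi (hc.1.trans hc.2)
  have hcard := (Finset.card_le_card hsub).trans (Finset.card_union_le _ _)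
  gcongr
  exact_mod_cast hcard

lemma hdist_compl {n : ℕ} (hn : 0 < n) (x y : Fin n → ZMod 2) :
    hdist x (fun i => y i + 1) = 1 - hdist x y := by
  classical
  have hkey : ∀ a b : ZMod 2, (a ≠ b + 1) ↔ a = b := by decide
  unfold hdist
  have h1 : (Finset.univ.filter fun i => x i ≠ y i + 1)
      = Finset.univ.filter fun i => x i = y i :=
    Finset.filter_congr fun i _ => hkey _ _
  rw [h1]
  have h2 := Finset.card_filter_add_card_filter_not
    (s := (Finset.univ : Finset (Fin n))) (p := fun i => x i = y i)
  simp only [Finset.card_univ, Fintype.card_fin] at h2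
  have hnR : (0:ℝ) < n := by exact_mod_cast hn
  have h3 : ((Finset.univ.filter fun i => x i = y i).card : ℝ)
      + ((Finset.univ.filter fun i => x i ≠ y i).card : ℝ) = n := by
    exact_mod_cast h2
  field_simp
  linarith

theorem stmt_12 {n k : ℕ} (hn : 0 < n) (ζ η : ℝ)
    (hζ : ζ < 1/2) (hη0 : 0 < η) (hη : η < 1/4)
    (W : Finset (Fin k → Fin n)) (hW : W.Nonempty)
    (hps : ∀ u : Fin n → ZMod 2, bias n u ≤ 1 - 2*ζ → biasW W (dsum W u) ≤ η)
    (C : Submodule (ZMod 2) (Fin n → ZMod 2))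
    (yt : {w // w ∈ W} → ZMod 2)
    (L' : Finset (Fin n → ZMod 2))
    (ha : ∀ z ∈ C, hdistW W (dsum W z) yt ≤ 1/2 - Real.sqrt η →
      ∃ z' ∈ L', 1 - 2*ζ < bias n (z - z'))
    (hb : ∀ z' ∈ L', hdistW W (dsum W z') yt ≤ 1/2 - Real.sqrt η) :
    ∃ L'' ⊆ L', (L''.card : ℝ) ≤ 1/η ∧
      ∀ z ∈ C, hdistW W (dsum W z) yt ≤ 1/2 - Real.sqrt η →
        ∃ z'' ∈ L'', hdist z z'' < 2*ζ ∨ 1 - 2*ζ < hdist z z'' := by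
  classical
  have hnR : (0:ℝ) < n := by exact_mod_cast hn
  have hNR : (0:ℝ) < (W.card : ℝ) := by exact_mod_cast hW.card_pos
  by_cases hζ0 : ζ ≤ 0
  · refine ⟨∅, Finset.empty_subset _, by simp; positivity, ?_⟩
    intro z hz hd
    obtain ⟨z', _, hbias⟩ := ha z hz hd
    have hle : bias n (z - z') ≤ 1 := by
      unfold bias
      rw [abs_div, abs_of_pos hnR, div_le_one hnR]
      calc |∑ i, (-1:ℝ)^(((z - z') i)).val| ≤ ∑ i, |(-1:ℝ)^(((z - z') i)).val| :=
            Finset.abs_sum_le_sum_abs _ _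
        _ = ∑ _i : Fin n, (1:ℝ) := by
            apply Finset.sum_congr rfl; intro i _
            rw [abs_pow, abs_neg, abs_one, one_pow]
        _ = n := by simp
    linarith
  push_neg at hζ0
  -- maximal "independent" subset of L'
  have hTne : (L'.powerset.filter fun S =>
      ∀ a ∈ S, ∀ b ∈ S, a ≠ b → bias n (a - b) ≤ 1 - 2*ζ).Nonempty := by
    refine ⟨∅, ?_⟩
    simp
  obtain ⟨M, hMT, hMmax'⟩ := Finset.exists_maximal hTne
  have hMmax : ∀ x ∈ _, ¬ M < x := fun x hx hlt => hlt.not_ge (hMmax' hx hlt.le)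
  rw [Finset.mem_filter, Finset.mem_powerset] at hMT
  obtain ⟨hML, hPM⟩ := hMT
  refine ⟨M, hML, ?_, ?_⟩
  · -- Johnson bound: |M| ≤ 1/η
    by_cases hM0 : M.card = 0
    · rw [hM0]; simp; positivity
    have hm1 : 1 ≤ M.card := Nat.one_le_iff_ne_zero.2 hM0
    have hm1R : (1:ℝ) ≤ (M.card : ℝ) := by exact_mod_cast hm1
    set N : ℝ := (W.card : ℝ) with hNdef
    set s : ℝ := Real.sqrt η with hsdef
    have hs0 : 0 ≤ s := Real.sqrt_nonneg η
    have hs2 : s * s = η := Real.mul_self_sqrt hη0.le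
    set g : (Fin n → ZMod 2) → {w // w ∈ W} → ℝ :=
      fun x w => (-1:ℝ)^((dsum W x w).val) with hg
    set u : {w // w ∈ W} → ℝ := fun w => (-1:ℝ)^((yt w).val) with hu
    set F : (Fin n → ZMod 2) → {w // w ∈ W} → ℝ :=
      fun x w => g x w - s * u w with hF
    have key0 : ∀ v1 v2 : {w // w ∈ W} → ZMod 2,
        ∑ w, (-1:ℝ)^((v1 w).val) * (-1:ℝ)^((v2 w).val)
          = N - 2 * ((Finset.univ.filter fun w => v1 w ≠ v2 w).card) := by
      intro v1 v2
      simp only [mul_term_eq]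
      rw [sum_sign_eq]
      simp [Fintype.card_coe, hNdef]
    have keyA : ∀ x ∈ M, 2*s*N ≤ ∑ w, g x w * u w := by
      intro x hx
      have hbx := hb x (hML hx)
      unfold hdistW at hbx
      rw [div_le_iff₀ hNR] at hbx
      simp only [hg, hu]
      rw [key0 (dsum W x) yt]
      linarith
    have keyB : ∀ x ∈ M, ∀ y ∈ M, x ≠ y → ∑ w, g x w * g y w ≤ η * N := by
      intro x hx y hy hxy
      have hbias := hPM x hx y hy hxy
      have hps' := hps (x - y) hbias
      have hlin : dsum W (x - y) = dsum W x - dsum W y := by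
        funext w
        simp [dsum, Pi.sub_apply, Finset.sum_sub_distrib]
      rw [hlin, biasW_sub_eq W hW] at hps'
      have h1 : 1 - 2 * hdistW W (dsum W x) (dsum W y) ≤ η := (le_abs_self _).trans hps'
      unfold hdistW at h1
      simp only [hg]
      rw [key0 (dsum W x) (dsum W y)]
      have h2 : (1 - η)/2 ≤ ((Finset.univ.filter fun w => dsum W x w ≠ dsum W y w).card : ℝ)
          / (W.card : ℝ) := by linarith
      rw [le_div_iff₀ hNR] at h2
      linarith
    have keyBB : ∀ x : Fin n → ZMod 2, ∑ w, g x w * g x w = N := by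
      intro x
      simp only [hg]
      rw [key0 (dsum W x) (dsum W x)]
      simp
    have keyU : ∑ w, u w * u w = N := by
      simp only [hu]
      rw [key0 yt yt]
      simp
    have hJ : ∀ x ∈ M, ∀ y ∈ M, ∑ w, F x w * F y w
        = (∑ w, g x w * g y w) - s * (∑ w, g x w * u w) - s * (∑ w, g y w * u w) + η * N := by
      intro x hx y hy
      have expand : ∀ w, F x w * F y w
          = g x w * g y w - s * (g x w * u w) - s * (g y w * u w) + (s*s) * (u w * u w) := by
        intro w; simp only [hF]; ring
      rw [Finset.sum_congr rfl fun w _ => expand w]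
      rw [Finset.sum_add_distrib, Finset.sum_sub_distrib, Finset.sum_sub_distrib,
        ← Finset.mul_sum, ← Finset.mul_sum, ← Finset.mul_sum, keyU, hs2]
    have hdiag : ∀ x ∈ M, ∑ w, F x w * F x w ≤ (1 - 3*η) * N := by
      intro x hx
      rw [hJ x hx x hx, keyBB]
      have hA := keyA x hx
      have hx' := mul_le_mul_of_nonneg_left hA hs0
      have e : s * (2*s*N) = 2*η*N := by rw [← hs2]; ring
      linarith
    have hoff : ∀ x ∈ M, ∀ y ∈ M, x ≠ y → ∑ w, F x w * F y w ≤ -(2*η*N) := by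
      intro x hx y hy hxy
      rw [hJ x hx y hy]
      have hx' := mul_le_mul_of_nonneg_left (keyA x hx) hs0
      have hy' := mul_le_mul_of_nonneg_left (keyA y hy) hs0
      have e : s * (2*s*N) = 2*η*N := by rw [← hs2]; ring
      have hB := keyB x hx y hy hxy
      linarith
    have hpos : (0:ℝ) ≤ ∑ w : {w // w ∈ W}, (∑ x ∈ M, F x w)^2 :=
      Finset.sum_nonneg fun _ _ => sq_nonneg _
    have hswap : ∑ w : {w // w ∈ W}, (∑ x ∈ M, F x w)^2
        = ∑ x ∈ M, ∑ y ∈ M, ∑ w : {w // w ∈ W}, F x w * F y w := by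
      have hsq : ∀ w : {w // w ∈ W}, (∑ x ∈ M, F x w)^2
          = ∑ x ∈ M, ∑ y ∈ M, F x w * F y w := by
        intro w; rw [sq, Finset.sum_mul_sum]
      rw [Finset.sum_congr rfl fun w _ => hsq w, Finset.sum_comm]
      exact Finset.sum_congr rfl fun x _ => Finset.sum_comm
    have per_x : ∀ x ∈ M, ∑ y ∈ M, ∑ w : {w // w ∈ W}, F x w * F y w
        ≤ (1-3*η)*N + ((M.card:ℝ) - 1) * (-(2*η*N)) := by
      intro x hx
      rw [← Finset.add_sum_erase _ _ hx]
      have h2 : ∑ y ∈ M.erase x, ∑ w : {w // w ∈ W}, F x w * F y w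
          ≤ (M.erase x).card • (-(2*η*N)) :=
        Finset.sum_le_card_nsmul _ _ _ (fun y hy =>
          hoff x hx y (Finset.mem_of_mem_erase hy) (Finset.ne_of_mem_erase hy).symm)
      rw [nsmul_eq_mul, Finset.card_erase_of_mem hx] at h2
      have hc : ((M.card - 1 : ℕ) : ℝ) = (M.card : ℝ) - 1 := by
        rw [Nat.cast_sub hm1]; simp
      rw [hc] at h2
      have := hdiag x hx
      linarith
    have total : (0:ℝ) ≤ (M.card : ℝ) * ((1-3*η)*N + ((M.card:ℝ) - 1) * (-(2*η*N))) := by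
      have h3 : ∑ x ∈ M, ∑ y ∈ M, ∑ w : {w // w ∈ W}, F x w * F y w
          ≤ M.card • ((1-3*η)*N + ((M.card:ℝ) - 1) * (-(2*η*N))) :=
        Finset.sum_le_card_nsmul _ _ _ per_x
      rw [nsmul_eq_mul] at h3
      calc (0:ℝ) ≤ _ := hpos
        _ = _ := hswap
        _ ≤ _ := h3
    -- conclude
    rw [le_div_iff₀ hη0]
    by_contra hcon
    push_neg at hcon
    have hmpos : (0:ℝ) < (M.card : ℝ) := by linarith
    have hneg : (1-3*η)*N + ((M.card:ℝ) - 1) * (-(2*η*N)) < 0 := by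
      nlinarith [mul_lt_mul_of_pos_right hcon hNR, mul_nonneg hη0.le hNR.le]
    nlinarith [mul_pos hmpos hNR]
  · -- covering
    intro z hz hd
    obtain ⟨z', hz'L, hbz⟩ := ha z hz hd
    have hz'' : ∃ z'' ∈ M, hdist z' z'' < ζ ∨ 1 - ζ < hdist z' z'' := by
      by_cases hmem : z' ∈ M
      · exact ⟨z', hmem, Or.inl (by rw [hdist_self]; exact hζ0)⟩
      · have hins : ¬ (∀ a ∈ insert z' M, ∀ b ∈ insert z' M, a ≠ b →
            bias n (a - b) ≤ 1 - 2*ζ) := by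
          intro hPins
          exact hMmax (insert z' M)
            (Finset.mem_filter.2 ⟨Finset.mem_powerset.2 (Finset.insert_subset hz'L hML), hPins⟩)
            (Finset.ssubset_insert hmem)
        push_neg at hins
        obtain ⟨a, haM, b, hbM, hab, hbias'⟩ := hins
        rw [Finset.mem_insert] at haM hbM
        rcases haM with rfl | haM
        · rcases hbM with rfl | hbM
          · exact absurd rfl hab
          · refine ⟨b, hbM, ?_⟩
            rw [bias_sub_eq hn] at hbias'
            rcases abs_cases (1 - 2 * hdist a b) with ⟨he, _⟩ | ⟨he, _⟩ <;>
              [left; right] <;> linarith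
        · rcases hbM with rfl | hbM
          · refine ⟨a, haM, ?_⟩
            rw [bias_sub_eq hn, hdist_comm] at hbias'
            rcases abs_cases (1 - 2 * hdist b a) with ⟨he, _⟩ | ⟨he, _⟩ <;>
              [left; right] <;> linarith
          · exact absurd (hPM a haM b hbM hab) (by linarith)
    obtain ⟨z'', hz''M, hd2⟩ := hz''
    have hd1 : hdist z z' < ζ ∨ 1 - ζ < hdist z z' := by
      rw [bias_sub_eq hn] at hbz
      rcases abs_cases (1 - 2 * hdist z z') with ⟨he, _⟩ | ⟨he, _⟩ <;>
        [left; right] <;> linarith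
    refine ⟨z'', hz''M, ?_⟩
    have t1 : hdist z z'' ≤ hdist z z' + hdist z' z'' := hdist_triangle z z' z''
    have t2 : hdist z z'' ≤ (1 - hdist z z') + (1 - hdist z' z'') := by
      have h := hdist_triangle z (fun i => z' i + 1) z''
      rw [hdist_compl hn z z'] at h
      have h2 : hdist (fun i => z' i + 1) z'' = 1 - hdist z' z'' := by
        rw [hdist_comm, hdist_compl hn z'' z', hdist_comm]
      rw [h2] at h
      exact h
    have t3 : hdist z' z'' ≤ hdist z z' + hdist z z'' := by
      calc hdist z' z'' ≤ hdist z' z + hdist z z'' := hdist_triangle z' z z''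
        _ = hdist z z' + hdist z z'' := by rw [hdist_comm z' z]
    have t4 : hdist z z' ≤ hdist z z'' + hdist z' z'' := by
      calc hdist z z' ≤ hdist z z'' + hdist z'' z' := hdist_triangle z z'' z'
        _ = hdist z z'' + hdist z' z'' := by rw [hdist_comm z'' z']
    rcases hd1 with h1 | h1 <;> rcases hd2 with h2 | h2
    · left; linarith
    · right; linarith
    · right; linarith
    · left; linarith
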